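/- For the standard mollifier μ, the function κ(σ) = μ(σ)·σ/(σ² − 1)² satisfies |κ(σ)| < 1/2 for all σ with |σ| < 1. -/

import Mathlib

noncomputable def stdMollifier (σ : ℝ) : ℝ :=
  if |σ| < 1 then Real.exp (-(1 / (1 - σ ^ 2))) else 0

lemma quartic_le_exp {x : ℝ} (hx : 0 ≤ x) :
    1 + x + x ^ 2 / 2 + x ^ 3 / 6 + x ^ 4 / 24 ≤ Real.exp x := by
  have h := Real.sum_le_exp_of_nonneg hx 5
  simp only [Finset.sum_range_succ, Finset.sum_range_zero, Nat.factorial] at h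
  norm_num at h
  linarith

lemma poly_key {x : ℝ} (hx : 1 ≤ x) :
    4 * (x - 1) * x ^ 3 < (1 + x + x ^ 2 / 2 + x ^ 3 / 6 + x ^ 4 / 24) ^ 2 := by
  nlinarith [sq_nonneg (x - 3), sq_nonneg (x ^ 2 - 3 * x), sq_nonneg (x ^ 2 - 6 * x + 3),
    sq_nonneg (x - 1), sq_nonneg x, sq_nonneg (x ^ 2 - 2 * x), sq_nonneg (x ^ 3 - 3 * x ^ 2),
    sq_nonneg (x ^ 2 + x - 8), mul_nonneg (sub_nonneg.2 hx) (sq_nonneg (x - 3))]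

theorem kappa_bound (σ : ℝ) (hσ : |σ| < 1) :
    |stdMollifier σ * σ / (σ ^ 2 - 1) ^ 2| < 1 / 2 := by
  have hσ2 : σ ^ 2 < 1 := by nlinarith [sq_abs σ, abs_nonneg σ]
  have ht : (0:ℝ) < 1 - σ ^ 2 := by linarith
  set t : ℝ := 1 - σ ^ 2 with htdef
  set x : ℝ := 1 / t with hxdef
  have hxt : x * t = 1 := by rw [hxdef]; exact one_div_mul_cancel ht.ne'
  have hx1 : 1 ≤ x := by
    rw [hxdef, le_div_iff₀ ht]; nlinarith [sq_nonneg σ]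
  have hx0 : (0:ℝ) < x := by linarith
  have hs : σ ^ 2 * x = x - 1 := by
    have : σ ^ 2 = 1 - t := by rw [htdef]; ring
    rw [this]; nlinarith [hxt]
  set S : ℝ := 1 + x + x ^ 2 / 2 + x ^ 3 / 6 + x ^ 4 / 24 with hSdef
  have hS0 : 0 < S := by positivity
  have hSexp : S ≤ Real.exp x := quartic_le_exp hx0.le
  have key : 2 * |σ| * x ^ 2 < S := by
    have h2 : (2 * |σ| * x ^ 2) ^ 2 < S ^ 2 := by
      have : (2 * |σ| * x ^ 2) ^ 2 = 4 * (σ ^ 2 * x) * x ^ 3 := by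
        rw [← sq_abs σ]; ring
      rw [this, hs]
      exact poly_key hx1
    have hnn : 0 ≤ 2 * |σ| * x ^ 2 := by positivity
    exact lt_of_pow_lt_pow_left₀ 2 hS0.le h2
  simp only [stdMollifier, if_pos hσ]
  have hsq : (σ ^ 2 - 1) ^ 2 = t ^ 2 := by rw [htdef]; ring
  rw [abs_div, abs_mul, abs_of_nonneg (Real.exp_nonneg _), hsq,
    abs_of_nonneg (sq_nonneg t), div_lt_iff₀ (by positivity : (0:ℝ) < t ^ 2)]
  have hexp : Real.exp (-(1 / t)) = (Real.exp x)⁻¹ := by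
    rw [hxdef, Real.exp_neg]
  rw [hexp]
  rw [inv_mul_lt_iff₀ (Real.exp_pos x)]
  calc |σ| = 2 * |σ| * x ^ 2 * (1 / 2 * t ^ 2) := by
        have : x ^ 2 * t ^ 2 = 1 := by nlinarith [hxt]
        nlinarith [this, abs_nonneg σ]
    _ < S * (1 / 2 * t ^ 2) := by
        apply mul_lt_mul_of_pos_right key; positivity
    _ ≤ Real.exp x * (1 / 2 * t ^ 2) := by
        apply mul_le_mul_of_nonneg_right hSexp; positivity
    _ = Real.exp x * (1 / 2 * t ^ 2) := rfl
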